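/- Let L be a locally compact Hausdorff space and U ⊆ L × L an open extremally antisymmetric set. Then f ↦ f - Jf (where Jg(x,y) = g(y,x)) defines a linear isometry from C₀(U) onto the subspace of antisymmetric functions in C₀(U ∪ Uˢᶜ). -/

import Mathlib

open ZeroAtInfty

/-- The functions in `C₀(L × L)` with (closed) support contained in `V`. -/
def suppIn (L : Type*) [TopologicalSpace L] (V : Set (L × L)) :
    Submodule ℝ C₀(L × L, ℝ) where
  carrier := {f | tsupport ⇑f ⊆ V}
  add_mem' := by
    intro f g hf hg
    have h : tsupport ⇑(f + g) ⊆ tsupport ⇑f ∪ tsupport ⇑g := by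
      exact (tsupport_add (f := ⇑f) (g := ⇑g))
    exact h.trans (Set.union_subset hf hg)
  zero_mem' := by simp [tsupport]
  smul_mem' := by
    intro c f hf
    have h : tsupport ⇑(c • f) ⊆ tsupport ⇑f := by
      apply closure_mono
      intro x hx
      simp only [ZeroAtInftyContinuousMap.coe_smul, Pi.smul_apply,
        Function.mem_support] at hx ⊢
      intro h0
      exact hx (by simp [h0])
    exact h.trans hf

/-- The symmetric functions in `C₀(L × L)` with support contained in `V`. -/
def asymSuppIn (L : Type*) [TopologicalSpace L] (V : Set (L × L)) :
    Submodule ℝ C₀(L × L, ℝ) where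
  carrier := {f | tsupport ⇑f ⊆ V ∧ ∀ x y : L, f (x, y) = -f (y, x)}
  add_mem' := by
    intro f g hf hg
    have h : tsupport ⇑(f + g) ⊆ tsupport ⇑f ∪ tsupport ⇑g := by
      exact (tsupport_add (f := ⇑f) (g := ⇑g))
    exact ⟨h.trans (Set.union_subset hf.1 hg.1), fun x y => by
      simp [hf.2 x y, hg.2 x y]; ring⟩
  zero_mem' := by simp [tsupport]
  smul_mem' := by
    intro c f hf
    have h : tsupport ⇑(c • f) ⊆ tsupport ⇑f := by
      apply closure_mono
      intro x hx
      simp only [ZeroAtInftyContinuousMap.coe_smul, Pi.smul_apply,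
        Function.mem_support] at hx ⊢
      intro h0
      exact hx (by simp [h0])
    exact ⟨h.trans hf.1, fun x y => by simp [hf.2 x y]⟩

section Aux

variable {L : Type*} [TopologicalSpace L]

/-- The swap operator on `C₀(L × L, ℝ)`. -/
noncomputable def Jmap (L : Type*) [TopologicalSpace L] :
    C₀(L × L, ℝ) →ₗ[ℝ] C₀(L × L, ℝ) :=
  ZeroAtInftyContinuousMap.compLinearMap (Homeomorph.prodComm L L).toCocompactMap

@[simp] lemma Jmap_apply (f : C₀(L × L, ℝ)) (p : L × L) :
    Jmap L f p = f p.swap := rfl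

lemma closure_disj {U : Set (L × L)} (hU : IsOpen U)
    (hanti : ∀ x y : L, (x, y) ∈ U → (y, x) ∉ U)
    {p : L × L} (hp : p ∈ closure U) : p.swap ∉ U := by
  intro hps
  have hopen : IsOpen (Prod.swap ⁻¹' U : Set (L × L)) := hU.preimage continuous_swap
  obtain ⟨q, hq1, hq2⟩ := mem_closure_iff.mp hp _ hopen hps
  exact hanti q.1 q.2 hq2 hq1

end Aux

/-- If `U ⊆ L × L` is an open extremally antisymmetric set, then `f ↦ f - Jf`
(with `Jf(x,y) = f(y,x)`) is a linear isometry from `C₀(U)` onto the antisymmetric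
functions in `C₀(U ∪ Uˢᶜ)`. -/
theorem stmt10 {L : Type*} [TopologicalSpace L] [LocallyCompactSpace L] [T2Space L]
    (U : Set (L × L)) (hU : IsOpen U)
    (hanti : ∀ x y : L, (x, y) ∈ U → (y, x) ∉ U) :
    ∃ Φ : suppIn L U ≃ₗᵢ[ℝ] asymSuppIn L (U ∪ Prod.swap '' U),
      ∀ (f : suppIn L U) (x y : L),
        (Φ f : C₀(L × L, ℝ)) (x, y)
          = (f : C₀(L × L, ℝ)) (x, y) - (f : C₀(L × L, ℝ)) (y, x) := by
  classical
  set W : Set (L × L) := U ∪ Prod.swap '' U with hW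
  set T : C₀(L × L, ℝ) →ₗ[ℝ] C₀(L × L, ℝ) := LinearMap.id - Jmap L with hT
  have hTapp : ∀ (f : C₀(L × L, ℝ)) (p : L × L), T f p = f p - f p.swap := by
    intro f p; simp [hT]
  have hvan : ∀ (f : C₀(L × L, ℝ)), tsupport ⇑f ⊆ U → ∀ p : L × L,
      f p ≠ 0 → f p.swap = 0 := by
    intro f hf p hp
    by_contra h
    exact hanti p.1 p.2 (hf (subset_tsupport _ hp)) (hf (subset_tsupport _ h))
  have hmem : ∀ f : C₀(L × L, ℝ), tsupport ⇑f ⊆ U →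
      T f ∈ asymSuppIn L W := by
    intro f hf
    constructor
    · have h1 : tsupport ⇑(T f) ⊆ tsupport ⇑f ∪ tsupport ⇑(Jmap L f) := by
        apply closure_minimal ?_ ((isClosed_tsupport _).union (isClosed_tsupport _))
        intro p hp
        rw [Function.mem_support, hTapp] at hp
        by_cases h : f p = 0
        · right
          refine subset_tsupport _ ?_
          simp only [Function.mem_support, Jmap_apply]
          intro h2
          exact hp (by rw [h, h2, sub_self])
        · exact Or.inl (subset_tsupport _ h)
      refine h1.trans (Set.union_subset (hf.trans Set.subset_union_left) ?_)
      have h2 : tsupport ⇑(Jmap L f) ⊆ Prod.swap ⁻¹' (tsupport ⇑f) := by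
        apply closure_minimal ?_ ((isClosed_tsupport _).preimage continuous_swap)
        intro p hp
        exact subset_tsupport _ hp
      refine h2.trans ?_
      intro p hp
      right
      rw [Set.image_swap_eq_preimage_swap]
      exact hf hp
    · intro x y
      simp [hTapp]
  set T' : suppIn L U →ₗ[ℝ] asymSuppIn L W :=
    { toFun := fun f => ⟨T f.1, hmem f.1 f.2⟩
      map_add' := by intro f g; ext1; simp
      map_smul' := by intro c f; ext1; simp } with hT'
  have hnorm : ∀ f : suppIn L U, ‖T' f‖ = ‖f‖ := by
    intro f
    rw [← Submodule.norm_coe, ← Submodule.norm_coe f]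
    have hcoe : ((T' f : asymSuppIn L W) : C₀(L × L, ℝ)) = T f.1 := rfl
    rw [hcoe]
    rw [← ZeroAtInftyContinuousMap.norm_toBCF_eq_norm,
      ← ZeroAtInftyContinuousMap.norm_toBCF_eq_norm]
    apply le_antisymm
    · refine (BoundedContinuousFunction.norm_le (norm_nonneg _)).2 ?_
      intro p
      change ‖T f.1 p‖ ≤ _
      rw [hTapp]
      rcases eq_or_ne (f.1 p) 0 with h0 | h0
      · rw [h0, zero_sub, norm_neg]
        exact BoundedContinuousFunction.norm_coe_le_norm ((f : C₀(L × L, ℝ)).toBCF) p.swap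
      · rw [hvan f.1 f.2 p h0, sub_zero]
        exact BoundedContinuousFunction.norm_coe_le_norm ((f : C₀(L × L, ℝ)).toBCF) p
    · refine (BoundedContinuousFunction.norm_le (norm_nonneg _)).2 ?_
      intro p
      change ‖f.1 p‖ ≤ _
      rcases eq_or_ne (f.1 p) 0 with h0 | h0
      · rw [h0]; simpa using norm_nonneg ((T f.1).toBCF)
      · have h1 : T f.1 p = f.1 p := by rw [hTapp, hvan f.1 f.2 p h0, sub_zero]
        calc ‖f.1 p‖ = ‖T f.1 p‖ := by rw [h1]
          _ ≤ _ := BoundedContinuousFunction.norm_coe_le_norm ((T f.1).toBCF) p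
  have hinj : Function.Injective T' := by
    intro f g hfg
    have h0 : T' (f - g) = 0 := by
      have hml := map_sub T' f g
      rw [hml, hfg, sub_self]
    have h1 : ‖f - g‖ = 0 := by
      rw [← hnorm (f - g)]
      simp [h0]
    exact sub_eq_zero.mp (norm_eq_zero.mp h1)
  have hsurj : Function.Surjective T' := by
    rintro ⟨g, hg1, hg2⟩
    set f₀ : L × L → ℝ := fun p => if p ∈ U then g p else 0 with hf₀
    have hsupp : Function.support f₀ ⊆ Function.support ⇑g ∩ U := by
      intro p hp
      simp only [hf₀, Function.mem_support] at hp
      by_cases h : p ∈ U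
      · rw [if_pos h] at hp; exact ⟨hp, h⟩
      · rw [if_neg h] at hp; exact absurd rfl hp
    have hbd : ∀ p : L × L, p ∈ closure U → p ∉ U → p ∉ tsupport ⇑g := by
      intro p hpc hpu hpt
      rcases hg1 hpt with h | h
      · exact hpu h
      · rw [Set.image_swap_eq_preimage_swap] at h
        exact closure_disj hU hanti hpc h
    have hcont : Continuous f₀ := by
      rw [continuous_iff_continuousAt]
      intro p
      by_cases hp : p ∈ U
      · refine g.continuous.continuousAt.congr ?_
        filter_upwards [hU.mem_nhds hp] with q hq
        simp [hf₀, if_pos hq]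
      · have hopen : IsOpen ((closure U)ᶜ ∪ (tsupport ⇑g)ᶜ) :=
          (isClosed_closure.isOpen_compl).union (isClosed_tsupport _).isOpen_compl
        have hpmem : p ∈ (closure U)ᶜ ∪ (tsupport ⇑g)ᶜ := by
          by_cases hc : p ∈ closure U
          · exact Or.inr (hbd p hc hp)
          · exact Or.inl hc
        have hev : f₀ =ᶠ[nhds p] fun _ => (0 : ℝ) := by
          filter_upwards [hopen.mem_nhds hpmem] with q hq
          rcases hq with h | h
          · simp only [hf₀]
            rw [if_neg (fun hqu => h (subset_closure hqu))]
          · have hq0 : g q = 0 := image_eq_zero_of_notMem_tsupport h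
            simp [hf₀, hq0]
        exact hev.continuousAt
    have hzero : Filter.Tendsto f₀ (Filter.cocompact (L × L)) (nhds 0) := by
      refine squeeze_zero_norm (a := fun p => ‖g p‖) (fun p => ?_) ?_
      · show ‖f₀ p‖ ≤ ‖g p‖
        by_cases h : p ∈ U
        · simp [hf₀, if_pos h]
        · simp [hf₀, if_neg h]
      · simpa using g.zero_at_infty'.norm
    set f : C₀(L × L, ℝ) := ⟨⟨f₀, hcont⟩, hzero⟩ with hf
    have hfsupp : tsupport ⇑f ⊆ U := by
      have h1 : tsupport f₀ ⊆ tsupport ⇑g ∩ closure U := by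
        apply closure_minimal ?_ ((isClosed_tsupport _).inter isClosed_closure)
        intro p hp
        exact ⟨subset_tsupport _ (hsupp hp).1, subset_closure (hsupp hp).2⟩
      intro p hp
      rcases h1 hp with ⟨hpg, hpc⟩
      by_contra hpu
      exact hbd p hpc hpu hpg
    refine ⟨⟨f, hfsupp⟩, ?_⟩
    apply Subtype.ext
    ext p
    show T f p = g p
    rw [hTapp]
    by_cases h1 : p ∈ U
    · have h2 : p.swap ∉ U := hanti p.1 p.2 (by simpa using h1)
      show f₀ p - f₀ p.swap = g p
      simp only [hf₀]
      rw [if_pos h1, if_neg h2, sub_zero]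
    · by_cases h2 : p.swap ∈ U
      · show f₀ p - f₀ p.swap = g p
        simp only [hf₀]
        rw [if_neg h1, if_pos h2, zero_sub]
        have h3 : g p.swap = - g p := by
          have h4 := hg2 p.2 p.1
          exact h4
        rw [h3, neg_neg]
      · have hpt : p ∉ tsupport ⇑g := by
          intro hpt
          rcases hg1 hpt with h | h
          · exact h1 h
          · rw [Set.image_swap_eq_preimage_swap] at h
            exact h2 h
        show f₀ p - f₀ p.swap = g p
        rw [image_eq_zero_of_notMem_tsupport hpt]
        simp only [hf₀]
        rw [if_neg h1, if_neg h2, sub_self]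
  refine ⟨{ toLinearEquiv := LinearEquiv.ofBijective T' ⟨hinj, hsurj⟩
            norm_map' := hnorm }, ?_⟩
  intro f x y
  show T f.1 (x, y) = f.1 (x, y) - f.1 (y, x)
  rw [hTapp]
  rfl
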